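/- Let t = (t_1,t_2,t_3,t_4) ∈ ℝ⁴ with t_1 ≠ 0. Define G : ℝ⁴ → ℝ by G(r_1,r_2,θ_1,θ_2) = Γ_t(r_1,r_2) + t_1·cos θ_2 · Ω̄(r_1,r_2) and K : ℝ⁴ → ℝ by K(r_1,r_2,θ_1,θ_2) = r_1²/2. Let p = (r_1,r_2,θ_1,θ_2) with r_2 > 0, 8−r_2² > 0, 2+2r_1²−r_2² > 0, 6−2r_1²+r_2² > 0, 4+r_1²−r_2² > 0 and 2−r_1²+r_2² > 0. If there exists s ∈ ℝ such that the Fréchet derivative of G at p equals s times the Fréchet derivative of K at p, then sin θ_2 = 0. -/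

import Mathlib

open Real

/-- `Γ_t(r_1,r_2)`. -/
noncomputable def Γt (t : Fin 4 → ℝ) (r₁ r₂ : ℝ) : ℝ :=
  (1 - 2 * t 0) * (2 - r₁ ^ 2 + r₂ ^ 2) / 2 +
  (t 1 / 50) * (6 - r₁ ^ 2) ^ 2 * (6 - 2 * r₁ ^ 2 + r₂ ^ 2) ^ 2 +
  (t 2 / 50) * (6 - 2 * r₁ ^ 2 + r₂ ^ 2) ^ 2 * (4 + r₁ ^ 2 - r₂ ^ 2) ^ 2 +
  (t 3 / 100) * (6 - r₁ ^ 2) ^ 2 * (4 + r₁ ^ 2 - r₂ ^ 2) ^ 2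

/-- `Ω̄(r_1,r_2)`. -/
noncomputable def Ωbar (r₁ r₂ : ℝ) : ℝ :=
  (r₂ / 50) * Real.sqrt ((8 - r₂ ^ 2) * (2 + 2 * r₁ ^ 2 - r₂ ^ 2) *
    (6 - 2 * r₁ ^ 2 + r₂ ^ 2) * (4 + r₁ ^ 2 - r₂ ^ 2) * (2 - r₁ ^ 2 + r₂ ^ 2))

/-- `G(r_1,r_2,θ_1,θ_2) = Γ_t(r_1,r_2) + t_1 cos θ_2 · Ω̄(r_1,r_2)`, i.e. `H_t ∘ φ_1`
in polar coordinates; the coordinates are `p 0 = r_1`, `p 1 = r_2`, `p 2 = θ_1`,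
`p 3 = θ_2`. -/
noncomputable def Gfun (t : Fin 4 → ℝ) (p : Fin 4 → ℝ) : ℝ :=
  Γt t (p 0) (p 1) + t 0 * Real.cos (p 3) * Ωbar (p 0) (p 1)

/-- `K(r_1,r_2,θ_1,θ_2) = r_1²/2`, i.e. `J ∘ φ_1` in polar coordinates. -/
noncomputable def Kfun (p : Fin 4 → ℝ) : ℝ := (p 0) ^ 2 / 2

/-- At a point of the chart domain (with `r_2 > 0` and all relevant radicand factors
positive), if `dG_p = s · dK_p` for some `s ∈ ℝ`, then `sin θ_2 = 0`: every rank-one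
singular point of `(J,H_t)` in the chart `φ_1` with `dJ ≠ 0` and `t_1 ≠ 0` has
`v = r_2 sin θ_2 = 0`. -/
theorem rank_one_singular_implies_sin_theta2_zero
    (t : Fin 4 → ℝ) (ht : t 0 ≠ 0) (p : Fin 4 → ℝ)
    (hr2 : 0 < p 1)
    (h3 : 0 < 8 - (p 1) ^ 2)
    (h5 : 0 < 2 + 2 * (p 0) ^ 2 - (p 1) ^ 2)
    (h2 : 0 < 6 - 2 * (p 0) ^ 2 + (p 1) ^ 2)
    (h4 : 0 < 4 + (p 0) ^ 2 - (p 1) ^ 2)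
    (h1 : 0 < 2 - (p 0) ^ 2 + (p 1) ^ 2)
    (s : ℝ)
    (hs : fderiv ℝ (Gfun t) p = s • fderiv ℝ Kfun p) :
    Real.sin (p 3) = 0 := by
  classical
  set e₃ : Fin 4 → ℝ := Pi.single 3 1 with he3
  -- the curve through p in direction e₃
  have hc : HasDerivAt (fun x : ℝ => p + x • e₃) e₃ 0 := by
    simpa using ((hasDerivAt_id (0:ℝ)).smul_const e₃).const_add p
  have hcoord : ∀ x : ℝ, (p + x • e₃) 0 = p 0 ∧ (p + x • e₃) 1 = p 1 ∧
      (p + x • e₃) 3 = p 3 + x := by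
    intro x
    refine ⟨?_, ?_, ?_⟩ <;> simp [he3, Pi.single_apply]
  -- positivity of the radicand
  set F : (Fin 4 → ℝ) → ℝ := fun q => (8 - (q 1) ^ 2) * (2 + 2 * (q 0) ^ 2 - (q 1) ^ 2) *
    (6 - 2 * (q 0) ^ 2 + (q 1) ^ 2) * (4 + (q 0) ^ 2 - (q 1) ^ 2) * (2 - (q 0) ^ 2 + (q 1) ^ 2)
    with hF
  have hFpos : 0 < F p := by
    exact mul_pos (mul_pos (mul_pos (mul_pos h3 h5) h2) h4) h1
  have hΩpos : 0 < Ωbar (p 0) (p 1) := by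
    have : 0 < Real.sqrt (F p) := Real.sqrt_pos.mpr hFpos
    have h50 : 0 < p 1 / 50 := by linarith
    simpa [Ωbar, hF] using mul_pos h50 this
  -- differentiability of Gfun at p
  have hFd : DifferentiableAt ℝ F p := by
    simp only [hF]; fun_prop
  have hsqrt : DifferentiableAt ℝ (fun q => Real.sqrt (F q)) p :=
    hFd.sqrt (ne_of_gt hFpos)
  have hΩd : DifferentiableAt ℝ (fun q : Fin 4 → ℝ => Ωbar (q 0) (q 1)) p := by
    have : DifferentiableAt ℝ (fun q : Fin 4 → ℝ => (q 1 / 50) * Real.sqrt (F q)) p := by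
      exact DifferentiableAt.mul (by fun_prop) hsqrt
    simpa [Ωbar, hF] using this
  have hGd : DifferentiableAt ℝ (Gfun t) p := by
    have h1d : DifferentiableAt ℝ (fun q : Fin 4 → ℝ => Γt t (q 0) (q 1)) p := by
      simp only [Γt]; fun_prop
    have h2d : DifferentiableAt ℝ (fun q : Fin 4 → ℝ =>
        t 0 * Real.cos (q 3) * Ωbar (q 0) (q 1)) p :=
      DifferentiableAt.mul (by fun_prop) hΩd
    exact h1d.add h2d
  -- directional derivative of G along e₃
  have hGcomp : HasDerivAt (fun x : ℝ => Gfun t (p + x • e₃))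
      (fderiv ℝ (Gfun t) p e₃) 0 := by
    have h : HasFDerivAt (Gfun t) (fderiv ℝ (Gfun t) p) (p + (0:ℝ) • e₃) := by
      simpa using hGd.hasFDerivAt
    exact h.comp_hasDerivAt 0 hc
  have hGcomp' : HasDerivAt (fun x : ℝ => Gfun t (p + x • e₃))
      (t 0 * (-Real.sin (p 3)) * Ωbar (p 0) (p 1)) 0 := by
    have hEq : (fun x : ℝ => Gfun t (p + x • e₃)) =
        fun x : ℝ => Γt t (p 0) (p 1) + t 0 * Real.cos (p 3 + x) * Ωbar (p 0) (p 1) := by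
      funext x
      obtain ⟨ha, hb, hc'⟩ := hcoord x
      simp [Gfun, ha, hb, hc']
    rw [hEq]
    have hinner : HasDerivAt (fun x : ℝ => p 3 + x) 1 0 := by
      simpa using (hasDerivAt_id (0:ℝ)).const_add (p 3)
    have hcos : HasDerivAt (fun x : ℝ => Real.cos (p 3 + x)) (-Real.sin (p 3)) 0 := by
      have := (Real.hasDerivAt_cos (p 3 + 0)).comp 0 hinner
      simp at this; exact this
    have := ((hcos.const_mul (t 0)).mul_const (Ωbar (p 0) (p 1))).const_add
      (Γt t (p 0) (p 1))
    exact this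
  have hGval : fderiv ℝ (Gfun t) p e₃ = t 0 * (-Real.sin (p 3)) * Ωbar (p 0) (p 1) :=
    hGcomp.unique hGcomp'
  -- directional derivative of K along e₃ is 0
  have hKd : DifferentiableAt ℝ Kfun p := by
    show DifferentiableAt ℝ (fun q : Fin 4 → ℝ => (q 0) ^ 2 / 2) p
    fun_prop
  have hKcomp : HasDerivAt (fun x : ℝ => Kfun (p + x • e₃))
      (fderiv ℝ Kfun p e₃) 0 := by
    have h : HasFDerivAt Kfun (fderiv ℝ Kfun p) (p + (0:ℝ) • e₃) := by
      simpa using hKd.hasFDerivAt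
    exact h.comp_hasDerivAt 0 hc
  have hKcomp' : HasDerivAt (fun x : ℝ => Kfun (p + x • e₃)) 0 0 := by
    have hEq : (fun x : ℝ => Kfun (p + x • e₃)) = fun _ : ℝ => (p 0) ^ 2 / 2 := by
      funext x
      obtain ⟨ha, _, _⟩ := hcoord x
      simp [Kfun, ha]
    rw [hEq]
    exact hasDerivAt_const 0 _
  have hKval : fderiv ℝ Kfun p e₃ = 0 := hKcomp.unique hKcomp'
  -- conclude
  have hmain : t 0 * (-Real.sin (p 3)) * Ωbar (p 0) (p 1) = 0 := by
    rw [← hGval, hs]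
    simp [hKval]
  rcases mul_eq_zero.mp hmain with h | h
  · rcases mul_eq_zero.mp h with h' | h'
    · exact absurd h' ht
    · linarith [neg_eq_zero.mp h']
  · exact absurd h (ne_of_gt hΩpos)
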